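/- Let n and k be positive integers with 2k < n, let p be a prime, and suppose g ∈ Sym(n) has order p and is quasi-semiregular in the action of Sym(n) on the set of k-element subsets of {1,…,n}. Then g has exactly k fixed points in {1,…,n}, every other orbit of ⟨g⟩ on {1,…,n} has length p (so g has cycle type 1^k p^{(n−k)/p}, and in particular p divides n − k and k < p), and the unique k-element subset fixed setwise by g is precisely the set of fixed points of g in {1,…,n}. -/

import Mathlib

open Equiv Finset

section Aux
variable {α : Type*} [DecidableEq α] [Fintype α] {g : Equiv.Perm α} {B : Finset α}

omit [Fintype α] in
lemma aux_mem_iff (h : B.image ⇑g = B) {x : α} : g x ∈ B ↔ x ∈ B := by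
  constructor
  · intro hx
    rw [← h] at hx
    obtain ⟨y, hy, hyx⟩ := Finset.mem_image.1 hx
    rwa [← g.injective hyx]
  · intro hx; rw [← h]; exact Finset.mem_image_of_mem _ hx

omit [Fintype α] in
lemma aux_pow_mem (h : B.image ⇑g = B) {x : α} (hx : x ∈ B) :
    ∀ i : ℕ, (g ^ i) x ∈ B := by
  intro i; induction i with
  | zero => simpa
  | succ i ih =>
    rw [pow_succ', Equiv.Perm.mul_apply]
    exact (aux_mem_iff h).2 ih

lemma aux_sameCycle_mem (h : B.image ⇑g = B) {x y : α} (hx : x ∈ B)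
    (hxy : g.SameCycle x y) : y ∈ B := by
  obtain ⟨i, _, hi⟩ := hxy.exists_pow_eq'
  rw [← hi]; exact aux_pow_mem h hx i

omit [Fintype α] in
lemma aux_inv_of_maps (h : ∀ x ∈ B, g x ∈ B) : B.image ⇑g = B :=
  Finset.eq_of_subset_of_card_le (Finset.image_subset_iff.2 h)
    (by rw [Finset.card_image_of_injective _ g.injective])

omit [Fintype α] in
lemma aux_inv_of_fixed (h : ∀ x ∈ B, g x = x) : B.image ⇑g = B := by
  refine aux_inv_of_maps fun x hx => ?_
  rw [h x hx]; exact hx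

lemma aux_swap {g : Equiv.Perm α} {A R Q : Finset α}
    (hfix : ∀ B : Finset α, B.card = A.card → B.image ⇑g = B → B = A)
    (hgA : A.image ⇑g = A)
    (hR : R ⊆ A) (hRinv : R.image ⇑g = R)
    (hQ : Disjoint Q A) (hQinv : Q.image ⇑g = Q) (hcard : Q.card = R.card)
    (hQne : Q.Nonempty) : False := by
  obtain ⟨b, hb⟩ := hQne
  have hbA : b ∉ A := Finset.disjoint_left.1 hQ hb
  set B := (A \ R) ∪ Q with hBdef
  have hdisj : Disjoint (A \ R) Q := (hQ.symm.mono_left (Finset.sdiff_subset))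
  have hBcard : B.card = A.card := by
    rw [hBdef, Finset.card_union_of_disjoint hdisj, Finset.card_sdiff_of_subset hR, hcard,
      Nat.sub_add_cancel (Finset.card_le_card hR)]
  have hBinv : B.image ⇑g = B := by
    have h1 : (A \ R).image ⇑g = A \ R := by
      refine aux_inv_of_maps fun x hx => ?_
      rw [Finset.mem_sdiff] at hx ⊢
      exact ⟨(aux_mem_iff hgA).2 hx.1, fun h => hx.2 ((aux_mem_iff hRinv).1 h)⟩
    rw [hBdef, Finset.image_union, h1, hQinv]
  have hBA : B = A := hfix B hBcard hBinv
  exact hbA (hBA ▸ Finset.mem_union_right _ hb)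

end Aux

lemma aux_orbit {n p : ℕ} (hp : p.Prime) {g : Equiv.Perm (Fin n)} (hord : orderOf g = p)
    {a : Fin n} (ha : g a ≠ a) :
    (g.cycleOf a).support.card = p ∧ (g.cycleOf a).support.image ⇑g = (g.cycleOf a).support ∧
      a ∈ (g.cycleOf a).support ∧ (∀ b, b ∈ (g.cycleOf a).support ↔ g.SameCycle a b) := by
  have hasupp : a ∈ g.support := Equiv.Perm.mem_support.2 ha
  have hmem : ∀ b, b ∈ (g.cycleOf a).support ↔ g.SameCycle a b := fun b => by
    rw [Equiv.Perm.mem_support_cycleOf_iff, and_iff_left hasupp]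
  have hcard : (g.cycleOf a).support.card = p := by
    obtain ⟨m, hm⟩ := Equiv.Perm.cycleType_prime_order (σ := g) (by rw [hord]; exact hp)
    have hmemct : (g.cycleOf a).support.card ∈ g.cycleType := by
      rw [Equiv.Perm.cycleType_def]
      exact Multiset.mem_map_of_mem _
        (by rw [Finset.mem_val]; exact Equiv.Perm.cycleOf_mem_cycleFactorsFinset_iff.2 hasupp)
    rw [hm] at hmemct
    rw [Multiset.eq_of_mem_replicate hmemct, hord]
  refine ⟨hcard, ?_, (hmem a).2 (Equiv.Perm.SameCycle.refl g a), hmem⟩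
  refine aux_inv_of_maps fun x hx => ?_
  rw [hmem] at hx ⊢
  exact hx.trans ⟨1, by simp⟩

theorem stmt14 {n k : ℕ} (hk : 0 < k) (hkn : 2 * k < n) {p : ℕ} (hp : p.Prime)
    (g : Equiv.Perm (Fin n)) (hord : orderOf g = p)
    (A : Finset (Fin n)) (hA : A.card = k)
    (hfix : ∀ B : Finset (Fin n), B.card = k → (B.image ⇑g = B ↔ B = A))
    (hsemi : ∀ (m : ℤ) (B : Finset (Fin n)), B.card = k → B ≠ A → B.image ⇑(g ^ m) = B →
      ∀ C : Finset (Fin n), C.card = k → C.image ⇑(g ^ m) = C) :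
    (Finset.univ.filter fun a => g a = a).card = k ∧
    k < p ∧ p ∣ n - k ∧
    (∀ a : Fin n, g a ≠ a → Nat.card {b : Fin n // ∃ m : ℤ, (g ^ m) a = b} = p) ∧
    A = Finset.univ.filter fun a => g a = a := by
  have hgA : A.image ⇑g = A := (hfix A hA).mpr rfl
  have hfix' : ∀ B : Finset (Fin n), B.card = A.card → B.image ⇑g = B → B = A := by
    intro B hB hBinv; exact (hfix B (hA ▸ hB)).1 hBinv
  -- the complement of A is invariant
  have hgU : (Finset.univ \ A).image ⇑g = Finset.univ \ A := by
    refine aux_inv_of_maps fun x hx => ?_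
    rw [Finset.mem_sdiff] at hx ⊢
    exact ⟨Finset.mem_univ _, fun h => hx.2 ((aux_mem_iff hgA).1 h)⟩
  have hUcard : (Finset.univ \ A).card = n - k := by
    rw [Finset.card_sdiff_of_subset (Finset.subset_univ A), Finset.card_univ, Fintype.card_fin, hA]
  have hknk : k < n - k := by omega
  -- every element of A is fixed
  have hAF : ∀ a ∈ A, g a = a := by
    intro a haA
    by_contra ha
    obtain ⟨hOcard, hOinv, hOa, hOmem⟩ := aux_orbit hp hord ha
    set O := (g.cycleOf a).support with hO
    have hOsub : O ⊆ A := fun b hb => aux_sameCycle_mem hgA haA ((hOmem b).1 hb)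
    have hpk : p ≤ k := hOcard ▸ hA ▸ Finset.card_le_card hOsub
    -- find an invariant Q of size p disjoint from A
    obtain ⟨Q, hQinv, hQcard, hQsub⟩ :
        ∃ Q : Finset (Fin n), Q.image ⇑g = Q ∧ Q.card = p ∧ Q ⊆ Finset.univ \ A := by
      by_cases hU : ∀ x ∈ Finset.univ \ A, g x = x
      · obtain ⟨P, hPsub, hPcard⟩ :=
          Finset.exists_subset_card_eq (show p ≤ (Finset.univ \ A).card by omega)
        exact ⟨P, aux_inv_of_fixed fun x hx => hU x (hPsub hx), hPcard, hPsub⟩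
      · push_neg at hU
        obtain ⟨b, hbU, hb⟩ := hU
        obtain ⟨hcard', hinv', hb', hmem'⟩ := aux_orbit hp hord hb
        exact ⟨(g.cycleOf b).support, hinv', hcard',
          fun c hc => aux_sameCycle_mem hgU hbU ((hmem' c).1 hc)⟩
    exact aux_swap hfix' hgA hOsub hOinv
      (Finset.disjoint_left.2 fun c hc => (Finset.mem_sdiff.1 (hQsub hc)).2)
      hQinv (by rw [hQcard, hOcard]) (Finset.card_pos.1 (by rw [hQcard]; exact hp.pos))
  -- A equals the fixed-point set
  have hFA : A = Finset.univ.filter fun a => g a = a := by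
    refine Finset.Subset.antisymm (fun a ha => Finset.mem_filter.2 ⟨Finset.mem_univ _, hAF a ha⟩)
      fun x hx => ?_
    by_contra hxA
    obtain ⟨a, haA⟩ := Finset.card_pos.1 (hA ▸ hk)
    have hxfix : g x = x := (Finset.mem_filter.1 hx).2
    set B := insert x (A.erase a) with hB
    have hxe : x ∉ A.erase a := fun h => hxA (Finset.mem_of_mem_erase h)
    have hBcard : B.card = A.card := by
      rw [hB, Finset.card_insert_of_notMem hxe, Finset.card_erase_of_mem haA, hA]
      omega
    have hBinv : B.image ⇑g = B := by
      refine aux_inv_of_fixed fun y hy => ?_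
      rcases Finset.mem_insert.1 hy with rfl | hy
      · exact hxfix
      · exact hAF y (Finset.mem_of_mem_erase hy)
    exact hxA (hfix' B hBcard hBinv ▸ Finset.mem_insert_self x _)
  have hFcard : (Finset.univ.filter fun a => g a = a).card = k := by rw [← hFA, hA]
  -- k < p
  have hkp : k < p := by
    by_contra hpk
    push_neg at hpk
    obtain ⟨b, hbU⟩ := Finset.card_pos.1 (show 0 < (Finset.univ \ A).card by omega)
    have hbA : b ∉ A := (Finset.mem_sdiff.1 hbU).2
    have hb : g b ≠ b := fun h =>
      hbA (hFA ▸ Finset.mem_filter.2 ⟨Finset.mem_univ _, h⟩)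
    obtain ⟨hcard', hinv', hb', hmem'⟩ := aux_orbit hp hord hb
    obtain ⟨S, hSsub, hScard⟩ := Finset.exists_subset_card_eq (show p ≤ A.card by omega)
    exact aux_swap hfix' hgA hSsub
      (aux_inv_of_fixed fun x hx => hAF x (hSsub hx))
      (Finset.disjoint_left.2 fun c hc h =>
        (Finset.mem_sdiff.1 (aux_sameCycle_mem hgU hbU ((hmem' c).1 hc))).2 h)
      hinv' (by rw [hcard', hScard]) ⟨b, hb'⟩
  -- p divides n - k
  have hdvd : p ∣ n - k := by
    have hsupp : g.support = Finset.univ \ A := by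
      ext x
      rw [Equiv.Perm.mem_support, Finset.mem_sdiff, hFA]
      simp
    obtain ⟨m, hm⟩ := Equiv.Perm.cycleType_prime_order (σ := g) (by rw [hord]; exact hp)
    have : g.support.card = (m + 1) * p := by
      rw [← Equiv.Perm.sum_cycleType, hm, Multiset.sum_replicate, smul_eq_mul, hord]
    rw [← hUcard, ← hsupp, this]
    exact dvd_mul_left p (m + 1)
  refine ⟨hFcard, hkp, hdvd, fun a ha => ?_, hFA⟩
  obtain ⟨hcard', hinv', ha', hmem'⟩ := aux_orbit hp hord ha
  calc Nat.card {b : Fin n // ∃ m : ℤ, (g ^ m) a = b}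
      = Nat.card ((g.cycleOf a).support) :=
        Nat.card_congr (Equiv.subtypeEquivRight fun b =>
          ⟨fun h => (hmem' b).2 h, fun h => (hmem' b).1 h⟩)
    _ = p := by rw [Nat.card_eq_finsetCard, hcard']
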